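/- Let p ≥ 4 with p ≡ 1 (mod 3), and let G be a graph of order p+5 of size ex(p+5, B_p) = (p+2)(p+5)/2 not containing B_p. Then the complement of G is 2-regular; moreover G is the complement of the disjoint union of (p+5)/3 triangles, i.e., G is the complete multipartite graph with (p+5)/3 parts of size 3. -/

import Mathlib

open SimpleGraph

/-- A graph contains the book `B_p` iff some edge has at least `p` common neighbors. -/
def SimpleGraph.ContainsBook {V : Type*} (G : SimpleGraph V) (p : ℕ) : Prop :=
  ∃ x y, G.Adj x y ∧ p ≤ (G.commonNeighbors x y).ncard

/-- The Turán number `ex(n, B_p)`: the maximum number of edges of a simple graph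
on `n` vertices containing no book `B_p`. -/
noncomputable def bookTuranNumber (n p : ℕ) : ℕ :=
  sSup {e : ℕ | ∃ G : SimpleGraph (Fin n), ¬ G.ContainsBook p ∧ G.edgeSet.ncard = e}

/-- The disjoint union of `m` copies of the complete graph `K_k`. -/
def unionComplete (m k : ℕ) : SimpleGraph (Fin m × Fin k) :=
  SimpleGraph.fromRel fun a b => a.1 = b.1

/-- The join `G ∨ H` of two graphs. -/
def SimpleGraph.join {α β : Type*} (G : SimpleGraph α) (H : SimpleGraph β) :
    SimpleGraph (α ⊕ β) := (Gᶜ ⊕g Hᶜ)ᶜ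

/-- A disjoint union of cycles `C_{i 0} + ⋯ + C_{i (t-1)}`. -/
def cycleFamily (t : ℕ) (i : Fin t → ℕ) : SimpleGraph (Σ j : Fin t, Fin (i j)) :=
  SimpleGraph.fromRel fun a b => ∃ h : a.1 = b.1, (SimpleGraph.cycleGraph (i b.1)).Adj (h ▸ a.2) b.2

set_option maxHeartbeats 1600000 in
theorem stmt18 (p : ℕ) (hp : 4 ≤ p) (hmod : p % 3 = 1) {V : Type*} [Fintype V]
    (hV : Fintype.card V = p + 5) (G : SimpleGraph V) (hfree : ¬ G.ContainsBook p)
    (hsize : G.edgeSet.ncard = (p + 2) * (p + 5) / 2) :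
    (∀ v : V, (Gᶜ.neighborSet v).ncard = 2) ∧
      Nonempty (G ≃g (unionComplete ((p + 5) / 3) 3)ᶜ) := by
  classical
  -- edge count of complement
  have hGe : G.edgeFinset.card = (p+2)*(p+5)/2 := by
    rw [← hsize, Set.ncard_eq_toFinset_card']
    congr 1
  have h2 : 2 ∣ (p+2)*(p+5) := by
    rcases Nat.even_or_odd p with ⟨k, hk⟩ | ⟨k, hk⟩
    · exact ⟨(k+1)*(p+5), by subst hk; ring⟩
    · exact ⟨(p+2)*(k+3), by subst hk; ring⟩
  obtain ⟨k, hk⟩ := h2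
  have hsplit : G.edgeFinset.card + Gᶜ.edgeFinset.card = (p+5).choose 2 := by
    have hd : Disjoint G.edgeSet Gᶜ.edgeSet := disjoint_edgeSet.mpr disjoint_compl_right
    have hu : G.edgeSet ∪ Gᶜ.edgeSet = (⊤ : SimpleGraph V).edgeSet := by
      rw [← edgeSet_sup, sup_compl_eq_top]
    have := Set.ncard_union_eq hd (Set.toFinite _) (Set.toFinite _)
    rw [hu] at this
    have htop : (⊤ : SimpleGraph V).edgeSet.ncard = (p+5).choose 2 := by
      rw [Set.ncard_eq_toFinset_card']
      rw [show ((⊤ : SimpleGraph V).edgeSet.toFinset) = (⊤ : SimpleGraph V).edgeFinset from rfl,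
        card_edgeFinset_top_eq_card_choose_two, hV]
    rw [show G.edgeFinset.card = G.edgeSet.ncard from (Set.ncard_eq_toFinset_card' _).symm,
      show Gᶜ.edgeFinset.card = Gᶜ.edgeSet.ncard from (Set.ncard_eq_toFinset_card' _).symm]
    omega
  have hchoose : (p+5).choose 2 = k + (p+5) := by
    rw [Nat.choose_two_right]
    have h0 : p+5-1 = p+4 := by omega
    rw [h0]
    have h1 : (p+5)*(p+4) = (p+2)*(p+5) + 2*(p+5) := by ring
    omega
  have hGek : G.edgeFinset.card = k := by omega
  have hGc : Gᶜ.edgeFinset.card = p+5 := by omega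
  -- handshake for complement
  have hsum : ∑ v, Gᶜ.degree v = 2 * (p+5) := by
    rw [sum_degrees_eq_twice_card_edges, hGc]
  -- ncard of neighbor set equals degree
  have hdeg : ∀ v, (Gᶜ.neighborSet v).ncard = Gᶜ.degree v := by
    intro v
    rw [← card_neighborSet_eq_degree, ← Nat.card_eq_fintype_card, Nat.card_coe_set_eq]
  -- book-freeness bound
  have hbook : ∀ x y, G.Adj x y → (G.commonNeighbors x y).ncard + 1 ≤ p := by
    intro x y hxy
    by_contra h
    exact hfree ⟨x, y, hxy, by omega⟩
  -- key counting lemma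
  have key : ∀ x y k, G.Adj x y → (Gᶜ.neighborSet x ∪ Gᶜ.neighborSet y).ncard ≤ k →
      p + 5 ≤ p + 1 + k := by
    intro x y k hxy hk
    have hsub : Set.univ \ ({x, y} ∪ (Gᶜ.neighborSet x ∪ Gᶜ.neighborSet y)) ⊆
        G.commonNeighbors x y := by
      intro z hz
      simp only [Set.mem_diff, Set.mem_union, Set.mem_insert_iff, Set.mem_singleton_iff,
        SimpleGraph.mem_neighborSet, compl_adj, not_or] at hz
      obtain ⟨-, h1, h2, h3⟩ := hz
      push_neg at h1
      constructor
      · by_contra hc; exact h2 ⟨Ne.symm h1.1, hc⟩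
      · by_contra hc; exact h3 ⟨Ne.symm h1.2, hc⟩
    have hA : ({x, y} ∪ (Gᶜ.neighborSet x ∪ Gᶜ.neighborSet y)).ncard ≤ 2 + k := by
      calc ({x, y} ∪ (Gᶜ.neighborSet x ∪ Gᶜ.neighborSet y)).ncard
          ≤ ({x, y} : Set V).ncard + (Gᶜ.neighborSet x ∪ Gᶜ.neighborSet y).ncard :=
            Set.ncard_union_le _ _
        _ ≤ 2 + k := by
            have : ({x, y} : Set V).ncard ≤ 2 := by
              apply le_trans (Set.ncard_insert_le _ _); simp
            omega
    have hdiff : (Set.univ \ ({x, y} ∪ (Gᶜ.neighborSet x ∪ Gᶜ.neighborSet y))).ncard =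
        (Set.univ : Set V).ncard - ({x, y} ∪ (Gᶜ.neighborSet x ∪ Gᶜ.neighborSet y)).ncard :=
      Set.ncard_diff (Set.subset_univ _)
    have huniv : (Set.univ : Set V).ncard = p + 5 := by
      rw [Set.ncard_univ, Nat.card_eq_fintype_card, hV]
    have hle := Set.ncard_le_ncard hsub (Set.toFinite _)
    have hb := hbook x y hxy
    omega
  -- for every edge of G, complement degrees sum to at least 4
  have pair : ∀ x y, G.Adj x y → 4 ≤ Gᶜ.degree x + Gᶜ.degree y := by
    intro x y hxy
    have := key x y ((Gᶜ.neighborSet x).ncard + (Gᶜ.neighborSet y).ncard) hxy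
      (Set.ncard_union_le _ _)
    rw [hdeg, hdeg] at this
    omega
  -- minimum complement degree is at least 2
  have hmin : ∀ v, 2 ≤ Gᶜ.degree v := by
    intro v
    by_contra h
    push_neg at h
    set S : Finset V := Finset.univ \ insert v (Gᶜ.neighborFinset v) with hS
    have hScard : p + 3 ≤ S.card := by
      have h1 : (insert v (Gᶜ.neighborFinset v)).card ≤ 1 + Gᶜ.degree v := by
        have : Gᶜ.degree v = (Gᶜ.neighborFinset v).card := rfl
        have := Finset.card_insert_le v (Gᶜ.neighborFinset v)
        omega
      have h2 : S.card = Fintype.card V - (insert v (Gᶜ.neighborFinset v)).card := by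
        rw [hS, Finset.card_sdiff_of_subset (Finset.subset_univ _), Finset.card_univ]
      omega
    have h3 : ∀ u ∈ S, 3 ≤ Gᶜ.degree u := by
      intro u hu
      rw [hS] at hu
      simp only [Finset.mem_sdiff, Finset.mem_insert, SimpleGraph.mem_neighborFinset,
        not_or] at hu
      have hadj : G.Adj v u := by
        have hcc := hu.2.2
        rw [compl_adj] at hcc
        push_neg at hcc
        exact hcc (Ne.symm hu.2.1)
      have := pair v u hadj
      omega
    have h4 : 3 * S.card ≤ ∑ u ∈ S, Gᶜ.degree u := by
      calc 3 * S.card = ∑ _u ∈ S, 3 := by rw [Finset.sum_const, smul_eq_mul, mul_comm]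
        _ ≤ ∑ u ∈ S, Gᶜ.degree u := Finset.sum_le_sum h3
    have h5 : ∑ u ∈ S, Gᶜ.degree u ≤ ∑ v, Gᶜ.degree v :=
      Finset.sum_le_sum_of_subset (Finset.subset_univ _)
    omega
  -- complement is 2-regular
  have hreg : ∀ v, Gᶜ.degree v = 2 := by
    have h2n : ∑ _v : V, 2 = 2 * (p + 5) := by
      rw [Finset.sum_const, Finset.card_univ, hV, smul_eq_mul]; ring
    have := (Finset.sum_eq_sum_iff_of_le (fun i _ => hmin i)).mp (by rw [hsum, h2n])
    intro v
    exact (this v (Finset.mem_univ v)).symm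
  have hN : ∀ v, (Gᶜ.neighborSet v).ncard = 2 := fun v => by rw [hdeg, hreg]
  -- triangle property
  have tri : ∀ z x y, x ≠ y → Gᶜ.Adj z x → Gᶜ.Adj z y → Gᶜ.Adj x y := by
    intro z x y hne hzx hzy
    by_contra hnxy
    have hadj : G.Adj x y := by
      rw [compl_adj] at hnxy
      push_neg at hnxy
      exact hnxy hne
    have hcup : (Gᶜ.neighborSet x ∪ Gᶜ.neighborSet y).ncard ≤ 3 := by
      have hzx' : z ∈ Gᶜ.neighborSet x := hzx.symm
      have hzy' : z ∈ Gᶜ.neighborSet y := hzy.symm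
      have heq : Gᶜ.neighborSet x ∪ Gᶜ.neighborSet y =
          Gᶜ.neighborSet x ∪ (Gᶜ.neighborSet y \ {z}) := by
        ext w
        simp only [Set.mem_union, Set.mem_diff, Set.mem_singleton_iff]
        constructor
        · rintro (h | h)
          · exact Or.inl h
          · by_cases hw : w = z
            · exact Or.inl (hw ▸ hzx')
            · exact Or.inr ⟨h, hw⟩
        · rintro (h | h)
          · exact Or.inl h
          · exact Or.inr h.1
      rw [heq]
      calc (Gᶜ.neighborSet x ∪ (Gᶜ.neighborSet y \ {z})).ncard
          ≤ (Gᶜ.neighborSet x).ncard + (Gᶜ.neighborSet y \ {z}).ncard :=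
            Set.ncard_union_le _ _
        _ ≤ 3 := by
            have h1 := hN x
            have h2 : (Gᶜ.neighborSet y \ {z}).ncard = (Gᶜ.neighborSet y).ncard - 1 := by
              rw [← Set.ncard_diff_singleton_of_mem hzy']
            have h3 := hN y
            omega
    have := key x y 3 hadj hcup
    omega
  -- setoid of triangle components
  let s : Setoid V := ⟨fun v w => v = w ∨ Gᶜ.Adj v w, by
    constructor
    · intro v; exact Or.inl rfl
    · intro v w h
      rcases h with h | h
      · exact Or.inl h.symm
      · exact Or.inr h.symm
    · intro a b c hab hbc
      rcases hab with rfl | hab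
      · exact hbc
      rcases hbc with rfl | hbc
      · exact Or.inr hab
      by_cases hac : a = c
      · exact Or.inl hac
      · exact Or.inr (tri b a c hac hab.symm hbc)⟩
  -- each class has exactly 3 elements
  have hfib : ∀ c : Quotient s, Fintype.card {w // Quotient.mk s w = c} = 3 := by
    intro c
    induction c using Quotient.ind with
    | _ v =>
      have e : {w // Quotient.mk s w = Quotient.mk s v} ≃
          (insert v (Gᶜ.neighborSet v) : Set V) := by
        apply Equiv.subtypeEquivRight
        intro w
        constructor
        · intro h
          have h2 : w = v ∨ Gᶜ.Adj w v := Quotient.exact h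
          rcases h2 with h2 | h2
          · exact Or.inl h2
          · exact Or.inr h2.symm
        · intro h
          apply Quotient.sound
          rcases h with h | h
          · exact Or.inl h
          · exact Or.inr ((Gᶜ.mem_neighborSet v w).mp h).symm
      rw [Fintype.card_congr e]
      have h3 : (insert v (Gᶜ.neighborSet v) : Set V).ncard = 3 := by
        have hv : v ∉ Gᶜ.neighborSet v := fun h => Gᶜ.irrefl h
        rw [Set.ncard_insert_of_notMem hv (Set.toFinite _), hN]
      rw [← Nat.card_coe_set_eq, Nat.card_eq_fintype_card] at h3
      exact h3
  let f2 : ∀ c : Quotient s, {w // Quotient.mk s w = c} ≃ Fin 3 :=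
    fun c => Fintype.equivFinOfCardEq (hfib c)
  let e3 : V ≃ Σ _c : Quotient s, Fin 3 :=
    ((Equiv.sigmaFiberEquiv (Quotient.mk s)).symm).trans (Equiv.sigmaCongrRight f2)
  have hQ : Fintype.card (Quotient s) = (p+5)/3 := by
    have h := Fintype.card_congr e3
    rw [hV, Fintype.card_sigma] at h
    simp only [Fintype.card_fin, Finset.sum_const, Finset.card_univ, smul_eq_mul] at h
    omega
  let e4 : Quotient s ≃ Fin ((p+5)/3) := Fintype.equivFinOfCardEq hQ
  let e : V ≃ Fin ((p+5)/3) × Fin 3 :=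
    e3.trans ((Equiv.sigmaEquivProd _ _).trans (Equiv.prodCongr e4 (Equiv.refl _)))
  have he1 : ∀ v, (e v).1 = e4 (Quotient.mk s v) := fun v => rfl
  refine ⟨hN, ⟨⟨e, ?_⟩⟩⟩
  intro a b
  have fact1 : ((e a).1 = (e b).1) ↔ (a = b ∨ Gᶜ.Adj a b) := by
    rw [he1 a, he1 b, Equiv.apply_eq_iff_eq]
    constructor
    · exact fun h => Quotient.exact h
    · exact fun h => Quotient.sound h
  have fact3 : e a = e b ↔ a = b := e.apply_eq_iff_eq
  have hadj : G.Adj a b ↔ (¬ a = b ∧ ¬ Gᶜ.Adj a b) := by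
    rw [compl_adj]
    constructor
    · intro h
      exact ⟨h.ne, fun hc => hc.2 h⟩
    · rintro ⟨hne, h⟩
      push_neg at h
      exact h hne
  show (unionComplete _ 3)ᶜ.Adj (e a) (e b) ↔ G.Adj a b
  rw [compl_adj, hadj]
  have hu : (unionComplete ((p+5)/3) 3).Adj (e a) (e b) ↔
      (e a ≠ e b ∧ (e a).1 = (e b).1) := by
    simp only [unionComplete, SimpleGraph.fromRel_adj]
    tauto
  rw [hu]
  simp only [ne_eq]
  tauto
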